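/- arXiv:1310.5168 — 7 statements merged into one kernel-verified Lean document; each statement's English description precedes it below -/
import Mathlib

section
/- Let A be an N×N real matrix and P an N×N permutation matrix such that AP is diagonal. Then (Pᵀ - I)AᵀA(P - I) = (P - I)AAᵀ(Pᵀ - I). -/
open Matrix

theorem AP_diag_quadratic_identity (N : ℕ)
    (A P : Matrix (Fin N) (Fin N) ℝ)
    (hP01 : ∀ i j, P i j = 0 ∨ P i j = 1)
    (hProw : ∀ i, ∃! j, P i j = 1)
    (hPcol : ∀ j, ∃! i, P i j = 1)
    (hAP : (A * P).IsDiag) :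
    (Pᵀ - 1) * Aᵀ * A * (P - 1) = (P - 1) * A * Aᵀ * (Pᵀ - 1) := by
  have h1 : P * Pᵀ = 1 := by
    ext i j
    simp only [Matrix.mul_apply, Matrix.transpose_apply, Matrix.one_apply]
    by_cases hij : i = j
    · subst hij
      simp only [if_pos rfl, if_true]
      obtain ⟨k0, hk0, huniq⟩ := hProw i
      rw [Finset.sum_eq_single k0]
      · rw [hk0]; ring
      · intro k _ hk
        rcases hP01 i k with h | h
        · rw [h]; ring
        · exact absurd (huniq k h) hk
      · intro h; exact absurd (Finset.mem_univ k0) h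
    · rw [if_neg hij]
      apply Finset.sum_eq_zero
      intro k _
      rcases hP01 i k with h | h
      · rw [h]; ring
      · rcases hP01 j k with h' | h'
        · rw [h']; ring
        · obtain ⟨m, hm, huniq⟩ := hPcol k
          exact absurd ((huniq i h).trans (huniq j h').symm) hij
  have h2 : Pᵀ * P = 1 := mul_eq_one_comm.mp h1
  set D := A * P with hD
  have hA : A = D * Pᵀ := by
    rw [hD, Matrix.mul_assoc, h1, Matrix.mul_one]
  have hDsymm : Dᵀ = D := hAP.isSymm
  have hAt : Aᵀ = P * D := by
    rw [hA, Matrix.transpose_mul, Matrix.transpose_transpose, hDsymm]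
  have hcomm : D * D = D * D := rfl
  rw [hAt, hA]
  simp only [Matrix.sub_mul, Matrix.mul_sub, Matrix.one_mul, Matrix.mul_one,
    Matrix.mul_assoc]
  rw [show Pᵀ * (P * (D * (D * (Pᵀ * P)))) = D * (D * (Pᵀ * P)) by
        rw [← Matrix.mul_assoc Pᵀ P, h2, Matrix.one_mul]]
  simp only [h1, h2, Matrix.mul_one]
  simp only [show ∀ X : Matrix (Fin N) (Fin N) ℝ, Pᵀ * (P * X) = X from
    fun X => by rw [← Matrix.mul_assoc, h2, Matrix.one_mul]]
  abel
end

section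
/- For every integer p ≥ 0, the sum over i from 1 to p+1 of i·C(2p+4, 2i+2) equals p·2^(2p+2) + 1. -/
open Finset

-- parity split
lemma my_split (f : ℕ → ℤ) : ∀ m : ℕ, ∑ k ∈ range (2*m+1), f k
    = ∑ i ∈ range (m+1), f (2*i) + ∑ i ∈ range m, f (2*i+1)
  | 0 => by simp
  | (m+1) => by
      have h : 2*(m+1)+1 = (2*m+1)+1+1 := by ring
      rw [h, Finset.sum_range_succ, Finset.sum_range_succ, my_split f m,
          Finset.sum_range_succ (fun i => f (2*i)) (m+1),
          Finset.sum_range_succ (fun i => f (2*i+1)) m]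
      have h2 : 2*(m+1) = 2*m+1+1 := by ring
      rw [h2]
      ring

lemma my_sum_choose (n : ℕ) : ∑ k ∈ range (n+1), ((n.choose k : ℤ)) = 2^n := by
  exact_mod_cast congrArg (Nat.cast : ℕ → ℤ) (Nat.sum_range_choose n)

lemma my_weighted (n : ℕ) : ∑ k ∈ range (n+2), (k : ℤ) * ((n+1).choose k) = (n+1) * 2^n := by
  rw [Finset.sum_range_succ']
  simp only [Nat.cast_zero, zero_mul, add_zero]
  have : ∀ j ∈ range (n+1), ((j:ℤ)+1) * (((n+1).choose (j+1) : ℤ))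
      = (n+1) * (n.choose j : ℤ) := by
    intro j hj
    have h : ((n:ℤ)+1) * (n.choose j) = ((n+1).choose (j+1) : ℤ) * ((j:ℤ)+1) := by
      exact_mod_cast Nat.add_one_mul_choose_eq n j
    linear_combination -h
  calc ∑ j ∈ range (n+1), ((j:ℤ)+1) * (((n+1).choose (j+1) : ℤ))
      = ∑ j ∈ range (n+1), (n+1) * (n.choose j : ℤ) := Finset.sum_congr rfl this
    _ = (n+1) * 2^n := by rw [← Finset.mul_sum, my_sum_choose]

lemma my_alt (n : ℕ) : ∑ k ∈ range (n+2), (-1:ℤ)^k * ((n+1).choose k) = 0 :=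
  Int.alternating_sum_range_choose_of_ne (Nat.succ_ne_zero n)

lemma my_alt_weighted (n : ℕ) : ∑ k ∈ range (n+3), (-1:ℤ)^k * k * ((n+2).choose k) = 0 := by
  rw [Finset.sum_range_succ']
  simp only [Nat.cast_zero, mul_zero, zero_mul, add_zero, pow_zero]
  have : ∀ j ∈ range (n+2), (-1:ℤ)^(j+1) * ((j:ℤ)+1) * (((n+2).choose (j+1) : ℤ))
      = -((n:ℤ)+2) * ((-1:ℤ)^j * ((n+1).choose j : ℤ)) := by
    intro j hj
    have h : ((n:ℤ)+2) * ((n+1).choose j) = ((n+2).choose (j+1) : ℤ) * ((j:ℤ)+1) := by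
      exact_mod_cast Nat.add_one_mul_choose_eq (n+1) j
    rw [pow_succ]
    linear_combination (-1:ℤ)^j * h
  calc ∑ j ∈ range (n+2), (-1:ℤ)^(j+1) * ((j:ℤ)+1) * (((n+2).choose (j+1) : ℤ))
      = ∑ j ∈ range (n+2), -((n:ℤ)+2) * ((-1:ℤ)^j * ((n+1).choose j : ℤ)) :=
        Finset.sum_congr rfl this
    _ = 0 := by rw [← Finset.mul_sum, my_alt]; ring

theorem sum_i_choose_even_4 (p : ℕ) :
    ∑ i ∈ Finset.Icc 1 (p + 1), i * Nat.choose (2 * p + 4) (2 * i + 2) =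
      p * 2 ^ (2 * p + 2) + 1 := by
  have key : ∑ i ∈ Finset.Icc 1 (p + 1), (i : ℤ) * ((2 * p + 4).choose (2 * i + 2)) =
      (p : ℤ) * 2 ^ (2 * p + 2) + 1 := by
    set n := 2 * p + 4 with hn
    have hS : ∑ k ∈ range (2*(p+2)+1), ((n.choose k : ℤ)) = 2 ^ (2*p+4) := by
      have := my_sum_choose n
      rwa [show n + 1 = 2*(p+2)+1 from by omega] at this
    have hA : ∑ k ∈ range (2*(p+2)+1), (-1:ℤ)^k * (n.choose k) = 0 := by
      have := my_alt (2*p+3)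
      rwa [show 2*p+3+2 = 2*(p+2)+1 from by omega, show 2*p+3+1 = n from by omega] at this
    have hSw : ∑ k ∈ range (2*(p+2)+1), (k : ℤ) * (n.choose k) = ((n:ℤ)) * 2 ^ (2*p+3) := by
      have := my_weighted (2*p+3)
      rw [show 2*p+3+2 = 2*(p+2)+1 from by omega, show 2*p+3+1 = n from by omega] at this
      rw [this]; push_cast [hn]; ring
    have hAw : ∑ k ∈ range (2*(p+2)+1), (-1:ℤ)^k * k * (n.choose k) = 0 := by
      have := my_alt_weighted (2*p+2)
      rwa [show 2*p+2+3 = 2*(p+2)+1 from by omega, show 2*p+2+2 = n from by omega] at this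
    set E := ∑ i ∈ range (p+3), ((n.choose (2*i) : ℤ)) with hE
    set O := ∑ i ∈ range (p+2), ((n.choose (2*i+1) : ℤ)) with hO
    set Ew := ∑ i ∈ range (p+3), (2*(i:ℤ)) * (n.choose (2*i)) with hEw
    set Ow := ∑ i ∈ range (p+2), (2*(i:ℤ)+1) * (n.choose (2*i+1)) with hOw
    have e1 : E + O = 2 ^ (2*p+4) := by
      rw [hE, hO, ← my_split (fun k => ((n.choose k : ℤ))) (p+2)]; exact hS
    have e2 : E - O = 0 := by
      have h := my_split (fun k => (-1:ℤ)^k * (n.choose k)) (p+2)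
      rw [hA] at h
      have he : ∑ i ∈ range (p+3), (-1:ℤ)^(2*i) * (n.choose (2*i)) = E := by
        rw [hE]
        refine Finset.sum_congr rfl fun i _ => ?_
        rw [pow_mul]; norm_num
      have ho : ∑ i ∈ range (p+2), (-1:ℤ)^(2*i+1) * (n.choose (2*i+1)) = -O := by
        rw [hO, ← Finset.sum_neg_distrib]
        refine Finset.sum_congr rfl fun i _ => ?_
        rw [pow_succ, pow_mul]; norm_num
      rw [he, ho] at h
      linarith [h]
    have e3 : Ew + Ow = ((n:ℤ)) * 2 ^ (2*p+3) := by
      have h := my_split (fun k => (k:ℤ) * (n.choose k)) (p+2)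
      rw [hSw] at h
      have he : ∑ i ∈ range (p+2+1), ((2*i : ℕ):ℤ) * (n.choose (2*i)) = Ew := by
        rw [hEw]
        refine Finset.sum_congr (by norm_num) fun i _ => by push_cast; ring
      have ho : ∑ i ∈ range (p+2), ((2*i+1 : ℕ):ℤ) * (n.choose (2*i+1)) = Ow := by
        rw [hOw]
        refine Finset.sum_congr rfl fun i _ => by push_cast; ring
      rw [he, ho] at h
      linarith [h]
    have e4 : Ew - Ow = 0 := by
      have h := my_split (fun k => (-1:ℤ)^k * k * (n.choose k)) (p+2)
      rw [hAw] at h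
      have he : ∑ i ∈ range (p+2+1), (-1:ℤ)^(2*i) * ((2*i : ℕ):ℤ) * (n.choose (2*i)) = Ew := by
        rw [hEw]
        refine Finset.sum_congr (by norm_num) fun i _ => ?_
        rw [pow_mul]; push_cast; norm_num
      have ho : ∑ i ∈ range (p+2), (-1:ℤ)^(2*i+1) * ((2*i+1 : ℕ):ℤ) * (n.choose (2*i+1)) = -Ow := by
        rw [hOw, ← Finset.sum_neg_distrib]
        refine Finset.sum_congr rfl fun i _ => ?_
        rw [pow_succ, pow_mul]; push_cast; ring
      rw [he, ho] at h
      linarith [h]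
    set X := ∑ j ∈ range (p+1), ((n.choose (2*j+4) : ℤ)) with hX
    set Y := ∑ j ∈ range (p+1), ((j:ℤ)) * (n.choose (2*j+4)) with hY
    have eE : E = X + (n.choose 2 : ℤ) + 1 := by
      rw [hE, Finset.sum_range_succ' (fun i => ((n.choose (2*i) : ℤ))) (p+2),
        Finset.sum_range_succ' (fun i => ((n.choose (2*(i+1)) : ℤ))) (p+1)]
      simp only [mul_zero, Nat.choose_zero_right, Nat.cast_one]
      rw [hX]
      have h : ∀ j ∈ range (p+1), ((n.choose (2*(j+1+1)) : ℤ)) = ((n.choose (2*j+4) : ℤ)) := by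
        intro j _; rw [show 2*(j+1+1) = 2*j+4 from by ring]
      rw [Finset.sum_congr rfl h]
    have eEw : Ew = 2*Y + 4*X + 2*(n.choose 2 : ℤ) := by
      rw [hEw, Finset.sum_range_succ' (fun i => (2*(i:ℤ)) * (n.choose (2*i))) (p+2),
        Finset.sum_range_succ' (fun i => (2*(((i+1 : ℕ)):ℤ)) * (n.choose (2*(i+1)))) (p+1)]
      rw [hX, hY]
      have h : ∀ j ∈ range (p+1), (2*(((j+1+1 : ℕ)):ℤ)) * (n.choose (2*(j+1+1)))
          = 2*(((j:ℤ)) * (n.choose (2*j+4))) + 4 * ((n.choose (2*j+4) : ℤ)) := by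
        intro j _; rw [show 2*(j+1+1) = 2*j+4 from by ring]; push_cast; ring
      rw [Finset.sum_congr rfl h, Finset.sum_add_distrib, ← Finset.mul_sum, ← Finset.mul_sum]
      norm_num
    have eT : ∑ i ∈ Finset.Icc 1 (p + 1), (i : ℤ) * (n.choose (2 * i + 2)) = Y + X := by
      rw [show Finset.Icc 1 (p+1) = Finset.Ico 1 (p+2) from (Finset.Ico_add_one_right_eq_Icc (a := 1) (b := p+1)).symm,
        Finset.sum_Ico_eq_sum_range]
      simp only [show p + 2 - 1 = p + 1 from by omega]
      rw [hX, hY, ← Finset.sum_add_distrib]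
      refine Finset.sum_congr rfl fun j _ => ?_
      rw [show 2*(1+j)+2 = 2*j+4 from by ring]
      push_cast
      ring
    have h1 : (2:ℤ)^(2*p+4) = 4 * 2^(2*p+2) := by rw [show 2*p+4 = 2*p+2+2 from by ring]; ring
    have h2 : (2:ℤ)^(2*p+3) = 2 * 2^(2*p+2) := by rw [show 2*p+3 = 2*p+2+1 from by ring]; ring
    have hn' : ((n:ℤ)) = 2*(p:ℤ)+4 := by rw [hn]; push_cast; ring
    rw [eT]
    rw [h1] at e1
    rw [h2, hn'] at e3
    nlinarith [e1, e2, e3, e4, eE, eEw]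
  have h2 := key
  push_cast at h2
  exact_mod_cast h2
end

section
/- For every integer p ≥ 0, the sum over i from 1 to p of i·C(2p+2, 2i+1) equals p·2^(2p). -/
open Finset

lemma split_even_odd (f : ℕ → ℕ) (m : ℕ) :
    ∑ i ∈ range m, (f (2 * i) + f (2 * i + 1)) = ∑ k ∈ range (2 * m), f k := by
  induction m with
  | zero => simp
  | succ m ih =>
    rw [Finset.sum_range_succ, ih, mul_add, mul_one, Finset.sum_range_succ,
      Finset.sum_range_succ]
    ring

lemma even_eq_odd_row (p : ℕ) :
    ∑ i ∈ range (p + 1), Nat.choose (2 * p + 1) (2 * i)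
      = ∑ i ∈ range (p + 1), Nat.choose (2 * p + 1) (2 * i + 1) := by
  rw [← Finset.sum_range_reflect (fun i => Nat.choose (2 * p + 1) (2 * i + 1)) (p + 1)]
  apply Finset.sum_congr rfl
  intro i hi
  simp only [Finset.mem_range] at hi
  have hip : i ≤ p := Nat.lt_succ_iff.mp hi
  have h1 : 2 * (p + 1 - 1 - i) + 1 = 2 * p + 1 - 2 * i := by omega
  simp only [h1]
  rw [← Nat.choose_symm (by omega : 2 * i ≤ 2 * p + 1)]

lemma even_row_sum (p : ℕ) :
    ∑ i ∈ range (p + 1), Nat.choose (2 * p + 1) (2 * i) = 2 ^ (2 * p) := by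
  have hfull : ∑ i ∈ range (p + 1),
      (Nat.choose (2 * p + 1) (2 * i) + Nat.choose (2 * p + 1) (2 * i + 1))
      = 2 ^ (2 * p + 1) := by
    rw [split_even_odd]
    have h : 2 * (p + 1) = (2 * p + 1) + 1 := by ring
    rw [h, Nat.sum_range_choose]
  rw [Finset.sum_add_distrib, ← even_eq_odd_row] at hfull
  omega

lemma odd_row_sum (p : ℕ) :
    ∑ i ∈ range (p + 1), Nat.choose (2 * p + 1) (2 * i + 1) = 2 ^ (2 * p) := by
  rw [← even_eq_odd_row, even_row_sum]

lemma odd_row_sum2 (p : ℕ) :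
    ∑ i ∈ range (p + 1), Nat.choose (2 * p + 2) (2 * i + 1) = 2 ^ (2 * p + 1) := by
  have h : ∀ i, Nat.choose (2 * p + 2) (2 * i + 1)
      = Nat.choose (2 * p + 1) (2 * i) + Nat.choose (2 * p + 1) (2 * i + 1) := by
    intro i
    exact Nat.choose_succ_succ (2 * p + 1) (2 * i)
  rw [Finset.sum_congr rfl (fun i _ => h i), Finset.sum_add_distrib,
    even_row_sum, odd_row_sum]
  ring

theorem sum_i_choose_odd (p : ℕ) :
    ∑ i ∈ Finset.Icc 1 p, i * Nat.choose (2 * p + 2) (2 * i + 1) =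
      p * 2 ^ (2 * p) := by
  have hIcc : ∑ i ∈ Finset.Icc 1 p, i * Nat.choose (2 * p + 2) (2 * i + 1)
      = ∑ i ∈ range (p + 1), i * Nat.choose (2 * p + 2) (2 * i + 1) := by
    rw [Finset.sum_range_succ' (fun i => i * Nat.choose (2 * p + 2) (2 * i + 1)) p,
      ← Finset.Ico_add_one_right_eq_Icc, Finset.sum_Ico_eq_sum_range]
    simp [add_comm 1]
  have key : ∀ i, (2 * i + 1) * Nat.choose (2 * p + 2) (2 * i + 1)
      = (2 * p + 2) * Nat.choose (2 * p + 1) (2 * i) := by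
    intro i
    have := Nat.add_one_mul_choose_eq (2 * p + 1) (2 * i)
    simpa [mul_comm] using this.symm
  have h1 : ∑ i ∈ range (p + 1), (2 * i + 1) * Nat.choose (2 * p + 2) (2 * i + 1)
      = (2 * p + 2) * 2 ^ (2 * p) := by
    rw [Finset.sum_congr rfl (fun i _ => key i), ← Finset.mul_sum, even_row_sum]
  have h2 : ∑ i ∈ range (p + 1), (2 * i + 1) * Nat.choose (2 * p + 2) (2 * i + 1)
      = 2 * ∑ i ∈ range (p + 1), i * Nat.choose (2 * p + 2) (2 * i + 1)
        + 2 ^ (2 * p + 1) := by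
    rw [Finset.mul_sum, ← odd_row_sum2 p, ← Finset.sum_add_distrib]
    apply Finset.sum_congr rfl
    intro i _
    ring
  rw [hIcc]
  have h3 : (2 * p + 2) * 2 ^ (2 * p) = 2 * (p * 2 ^ (2 * p)) + 2 ^ (2 * p + 1) := by
    ring
  rw [h2, h3] at h1
  omega
end

section
/- For every integer p ≥ 0, the sum over i from 1 to p of i·C(2p+3, 2i+2) equals (2p-1)·2^(2p) + 1. -/
open Finset

lemma my_interleave (f : ℕ → ℤ) (n : ℕ) :
    ∑ k ∈ range (2 * n), f k = ∑ i ∈ range n, f (2 * i) + ∑ i ∈ range n, f (2 * i + 1) := by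
  induction n with
  | zero => simp
  | succ n ih =>
    rw [show 2 * (n + 1) = 2 * n + 1 + 1 from by ring, Finset.sum_range_succ,
      Finset.sum_range_succ, ih, Finset.sum_range_succ, Finset.sum_range_succ]
    ring

lemma my_even_sum (m : ℕ) :
    ∑ i ∈ range (m + 1), (Nat.choose (2 * m + 1) (2 * i) : ℤ) = 4 ^ m ∧
    ∑ i ∈ range (m + 1), (Nat.choose (2 * m + 1) (2 * i + 1) : ℤ) = 4 ^ m := by
  set E := ∑ i ∈ range (m + 1), (Nat.choose (2 * m + 1) (2 * i) : ℤ) with hE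
  set O := ∑ i ∈ range (m + 1), (Nat.choose (2 * m + 1) (2 * i + 1) : ℤ) with hO
  have htot : E + O = 2 * 4 ^ m := by
    rw [hE, hO, ← my_interleave (fun k => (Nat.choose (2 * m + 1) k : ℤ)) (m + 1)]
    have := Nat.sum_range_choose (2 * m + 1)
    have hcast : ∑ k ∈ range (2 * (m + 1)), (Nat.choose (2 * m + 1) k : ℤ)
        = ((∑ k ∈ range (2 * m + 1 + 1), Nat.choose (2 * m + 1) k : ℕ) : ℤ) := by
      push_cast
      congr 1
    rw [hcast, this]
    push_cast
    rw [pow_succ, pow_mul]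
    ring
  have hEO : E = O := by
    rw [hE, hO]
    rw [← Finset.sum_range_reflect (fun j => (Nat.choose (2 * m + 1) (2 * j + 1) : ℤ)) (m + 1)]
    apply Finset.sum_congr rfl
    intro j hj
    simp only [Finset.mem_range] at hj
    have hjm : j ≤ m := Nat.lt_succ_iff.mp hj
    have h1 : m + 1 - 1 - j = m - j := by omega
    have h2 : 2 * (m - j) + 1 = (2 * m + 1) - (2 * j) := by omega
    rw [h1, h2, Nat.choose_symm (by omega)]
  constructor
  · linarith
  · linarith

lemma odd_even_n (p : ℕ) :
    ∑ i ∈ range (p + 1), (Nat.choose (2 * p + 2) (2 * i + 1) : ℤ) = 2 ^ (2 * p + 1) := by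
  have h : ∀ i, (Nat.choose (2 * p + 2) (2 * i + 1) : ℤ)
      = (Nat.choose (2 * p + 1) (2 * i) : ℤ) + (Nat.choose (2 * p + 1) (2 * i + 1) : ℤ) := by
    intro i
    exact_mod_cast Nat.choose_succ_succ (2 * p + 1) (2 * i)
  calc ∑ i ∈ range (p + 1), (Nat.choose (2 * p + 2) (2 * i + 1) : ℤ)
      = ∑ i ∈ range (p + 1), ((Nat.choose (2 * p + 1) (2 * i) : ℤ)
          + (Nat.choose (2 * p + 1) (2 * i + 1) : ℤ)) := Finset.sum_congr rfl (fun i _ => h i)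
    _ = 2 ^ (2 * p + 1) := by
        rw [Finset.sum_add_distrib, (my_even_sum p).1, (my_even_sum p).2, pow_succ, pow_mul]
        ring

lemma even_shift (p : ℕ) :
    ∑ i ∈ range (p + 1), (Nat.choose (2 * p + 3) (2 * i + 2) : ℤ) = 4 ^ (p + 1) - 1 := by
  have h := (my_even_sum (p + 1)).1
  rw [show 2 * (p + 1) + 1 = 2 * p + 3 from by ring] at h
  rw [Finset.sum_range_succ' (fun i => (Nat.choose (2 * p + 3) (2 * i) : ℤ)) (p + 1)] at h
  simp only [mul_zero, Nat.choose_zero_right, Nat.cast_one] at h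
  have : ∑ i ∈ range (p + 1), (Nat.choose (2 * p + 3) (2 * (i + 1)) : ℤ)
      = ∑ i ∈ range (p + 1), (Nat.choose (2 * p + 3) (2 * i + 2) : ℤ) := by
    apply Finset.sum_congr rfl
    intro i _
    congr 1 <;> omega
  rw [this] at h
  linarith

theorem sum_i_choose_odd_even (p : ℕ) :
    ∑ i ∈ Finset.Icc 1 p, (i : ℤ) * Nat.choose (2 * p + 3) (2 * i + 2) =
      (2 * (p : ℤ) - 1) * 2 ^ (2 * p) + 1 := by
  set f : ℕ → ℤ := fun i => (i : ℤ) * Nat.choose (2 * p + 3) (2 * i + 2) with hf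
  have hIcc : ∑ i ∈ Finset.Icc 1 p, f i = ∑ i ∈ range (p + 1), f i := by
    rw [Finset.sum_range_succ' f p,
      show Finset.Icc 1 p = Finset.Ico 1 (p + 1) from by rw [Finset.Ico_add_one_right_eq_Icc],
      Finset.sum_Ico_eq_sum_range]
    have hf0 : f 0 = 0 := by simp [hf]
    rw [hf0, add_zero, Nat.add_sub_cancel]
    apply Finset.sum_congr rfl
    intro i _
    rw [Nat.add_comm 1 i]
  have key : ∀ i : ℕ, (2 : ℤ) * f i
      = (2 * (p : ℤ) + 3) * Nat.choose (2 * p + 2) (2 * i + 1)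
        - 2 * Nat.choose (2 * p + 3) (2 * i + 2) := by
    intro i
    have h := Nat.add_one_mul_choose_eq (2 * p + 2) (2 * i + 1)
    have h' : ((2 * p + 2 + 1) * Nat.choose (2 * p + 2) (2 * i + 1) : ℤ)
        = (Nat.choose (2 * p + 3) (2 * i + 2) * (2 * i + 2) : ℤ) := by
      exact_mod_cast congrArg (Nat.cast : ℕ → ℤ) h
    simp only [hf]
    push_cast at h' ⊢
    nlinarith [h']
  have h2S : 2 * ∑ i ∈ range (p + 1), f i
      = (2 * (p : ℤ) + 3) * 2 ^ (2 * p + 1) - 2 * (4 ^ (p + 1) - 1) := by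
    rw [Finset.mul_sum]
    rw [Finset.sum_congr rfl (fun i _ => key i)]
    rw [Finset.sum_sub_distrib, ← Finset.mul_sum, ← Finset.mul_sum, odd_even_n p, even_shift p]
  rw [hIcc]
  have h4 : (4 : ℤ) ^ (p + 1) = 4 * 2 ^ (2 * p) := by
    rw [pow_succ, pow_mul]; ring
  have h2 : (2 : ℤ) ^ (2 * p + 1) = 2 * 2 ^ (2 * p) := by rw [pow_succ]; ring
  rw [h4, h2] at h2S
  linarith
end

section
/- For every integer p ≥ 0, the sum over i from 1 to p of i·C(2p+3, 2i+1) equals (2p+1)·2^(2p) - p - 1. -/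
open Finset

private lemma split_parity (m : ℕ) (f : ℕ → ℤ) :
    ∑ k ∈ range (2 * m), f k = ∑ i ∈ range m, (f (2 * i) + f (2 * i + 1)) := by
  induction m with
  | zero => simp
  | succ m ih =>
    have h : 2 * (m + 1) = 2 * m + 1 + 1 := by ring
    rw [h, Finset.sum_range_succ, Finset.sum_range_succ, ih, Finset.sum_range_succ]
    ring

private lemma cast_sum_choose (n : ℕ) :
    ∑ i ∈ range (n + 1), (n.choose i : ℤ) = 2 ^ n := by
  exact_mod_cast congrArg (Nat.cast (R := ℤ)) (Nat.sum_range_choose n)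

private lemma succ_mul_choose_int (n i : ℕ) :
    ((i : ℤ) + 1) * ((n + 1).choose (i + 1)) = ((n : ℤ) + 1) * (n.choose i) := by
  have h := Nat.add_one_mul_choose_eq n i
  have h' : ((n : ℤ) + 1) * (n.choose i) = ((n + 1).choose (i + 1)) * ((i : ℤ) + 1) := by
    exact_mod_cast h
  linarith [h']

private lemma sum_k_choose (n : ℕ) :
    ∑ k ∈ range (n + 2), (k : ℤ) * ((n + 1).choose k) = ((n : ℤ) + 1) * 2 ^ n := by
  rw [Finset.sum_range_succ']
  push_cast
  rw [Finset.sum_congr rfl (fun i _ => succ_mul_choose_int n i), ← Finset.mul_sum,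
    cast_sum_choose]
  ring

private lemma alt_sum_k_choose (n : ℕ) :
    ∑ k ∈ range (n + 3), (-1 : ℤ) ^ k * k * ((n + 2).choose k) = 0 := by
  rw [Finset.sum_range_succ']
  push_cast
  have h : ∀ i ∈ range (n + 2), (-1 : ℤ) ^ (i + 1) * ((i : ℤ) + 1) * ((n + 2).choose (i + 1))
      = (-((n : ℤ) + 2)) * ((-1 : ℤ) ^ i * ((n + 1).choose i)) := by
    intro i _
    have := succ_mul_choose_int (n + 1) i
    push_cast at this
    calc (-1 : ℤ) ^ (i + 1) * ((i : ℤ) + 1) * ((n + 2).choose (i + 1))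
        = (-(-1 : ℤ) ^ i) * (((i : ℤ) + 1) * ((n + 2).choose (i + 1))) := by ring
      _ = (-(-1 : ℤ) ^ i) * (((n : ℤ) + 2) * ((n + 1).choose i)) := by
          rw [show ((i : ℤ) + 1) * ((n + 2).choose (i + 1)) = ((n : ℤ) + 2) * ((n + 1).choose i)
            from by exact_mod_cast this]
      _ = (-((n : ℤ) + 2)) * ((-1 : ℤ) ^ i * ((n + 1).choose i)) := by ring
  rw [Finset.sum_congr rfl h, ← Finset.mul_sum]
  have halt : ∑ i ∈ range (n + 2), (-1 : ℤ) ^ i * ((n + 1).choose i) = 0 := by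
    have := Int.alternating_sum_range_choose_of_ne (n := n + 1) (by omega)
    simpa using this
  rw [halt]
  ring

private lemma alt_sum_choose (n : ℕ) :
    ∑ k ∈ range (n + 2), (-1 : ℤ) ^ k * ((n + 1).choose k) = 0 := by
  have := Int.alternating_sum_range_choose_of_ne (n := n + 1) (by omega)
  simpa using this

theorem sum_i_choose_odd_odd (p : ℕ) :
    ∑ i ∈ Finset.Icc 1 p, (i : ℤ) * Nat.choose (2 * p + 3) (2 * i + 1) =
      (2 * (p : ℤ) + 1) * 2 ^ (2 * p) - p - 1 := by
  set n : ℕ := 2 * p + 3 with hn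
  -- full range facts, range (2p+4) = range (2*(p+2))
  have e1 : (2 * p + 3) + 1 = 2 * (p + 2) := by ring
  have A : ∑ k ∈ range (2 * (p + 2)), (k : ℤ) * (n.choose k) = ((2 * (p : ℤ) + 2) + 1) * 2 ^ (2 * p + 2) := by
    have := sum_k_choose (2 * p + 2)
    rw [show 2 * p + 2 + 2 = 2 * (p + 2) from by ring] at this
    rw [show (2 * p + 2) + 1 = n from by omega] at this
    push_cast at this ⊢
    linarith [this]
  have B : ∑ k ∈ range (2 * (p + 2)), (-1 : ℤ) ^ k * k * (n.choose k) = 0 := by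
    have := alt_sum_k_choose (2 * p + 1)
    rw [show 2 * p + 1 + 3 = 2 * (p + 2) from by ring, show 2 * p + 1 + 2 = n from by omega] at this
    exact this
  have S : ∑ k ∈ range (2 * (p + 2)), (n.choose k : ℤ) = 2 ^ (2 * p + 3) := by
    have := cast_sum_choose n
    rw [show n + 1 = 2 * (p + 2) from by omega] at this
    exact this
  have T : ∑ k ∈ range (2 * (p + 2)), (-1 : ℤ) ^ k * (n.choose k) = 0 := by
    have := alt_sum_choose (2 * p + 2)
    rw [show 2 * p + 2 + 2 = 2 * (p + 2) from by ring, show 2 * p + 2 + 1 = n from by omega] at this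
    exact this
  -- split into parities
  rw [split_parity] at A B S T
  -- 2 * odd-weighted-sum = A - B pointwise combination
  have heven : ∀ i : ℕ, (-1 : ℤ) ^ (2 * i) = 1 := fun i => by
    rw [pow_mul]; norm_num
  have hodd : ∀ i : ℕ, (-1 : ℤ) ^ (2 * i + 1) = -1 := fun i => by
    rw [pow_succ, pow_mul]; norm_num
  have X : 2 * ∑ i ∈ range (p + 2), ((2 * i + 1 : ℕ) : ℤ) * (n.choose (2 * i + 1))
      = ((2 * (p : ℤ) + 2) + 1) * 2 ^ (2 * p + 2) := by
    calc 2 * ∑ i ∈ range (p + 2), ((2 * i + 1 : ℕ) : ℤ) * (n.choose (2 * i + 1))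
        = ∑ i ∈ range (p + 2),
            ((((2 * i : ℕ) : ℤ) * (n.choose (2 * i)) + ((2 * i + 1 : ℕ) : ℤ) * (n.choose (2 * i + 1)))
            - ((-1 : ℤ) ^ (2 * i) * ((2 * i : ℕ) : ℤ) * (n.choose (2 * i))
              + (-1 : ℤ) ^ (2 * i + 1) * ((2 * i + 1 : ℕ) : ℤ) * (n.choose (2 * i + 1)))) := by
          rw [Finset.mul_sum]
          apply Finset.sum_congr rfl
          intro i _
          rw [heven i, hodd i]
          push_cast
          ring
      _ = ((2 * (p : ℤ) + 2) + 1) * 2 ^ (2 * p + 2) := by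
          rw [Finset.sum_sub_distrib, A, B]
          ring
  have Y : 2 * ∑ i ∈ range (p + 2), (n.choose (2 * i + 1) : ℤ) = 2 ^ (2 * p + 3) := by
    calc 2 * ∑ i ∈ range (p + 2), (n.choose (2 * i + 1) : ℤ)
        = ∑ i ∈ range (p + 2),
            (((n.choose (2 * i) : ℤ) + (n.choose (2 * i + 1) : ℤ))
            - ((-1 : ℤ) ^ (2 * i) * (n.choose (2 * i)) + (-1 : ℤ) ^ (2 * i + 1) * (n.choose (2 * i + 1)))) := by
          rw [Finset.mul_sum]
          apply Finset.sum_congr rfl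
          intro i _
          rw [heven i, hodd i]
          ring
      _ = 2 ^ (2 * p + 3) := by
          rw [Finset.sum_sub_distrib, S, T]
          ring
  -- the i-weighted odd sum over the full range
  have Z : ∑ i ∈ range (p + 2), (i : ℤ) * (n.choose (2 * i + 1))
      = (2 * (p : ℤ) + 1) * 2 ^ (2 * p) := by
    have h4 : (4 : ℤ) * ∑ i ∈ range (p + 2), (i : ℤ) * (n.choose (2 * i + 1))
        = (2 * (p : ℤ) + 1) * 2 ^ (2 * p) * 4 := by
      have comb : ∀ i : ℕ, (4 : ℤ) * ((i : ℤ) * (n.choose (2 * i + 1)))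
          = 2 * (((2 * i + 1 : ℕ) : ℤ) * (n.choose (2 * i + 1)))
            - 2 * ((n.choose (2 * i + 1) : ℤ)) := by
        intro i; push_cast; ring
      rw [Finset.mul_sum, Finset.sum_congr rfl (fun i _ => comb i), Finset.sum_sub_distrib,
        ← Finset.mul_sum, ← Finset.mul_sum]
      rw [X, Y]
      ring
    linarith [h4]
  -- relate Icc 1 p to range (p + 2)
  have hIcc : ∑ i ∈ Finset.Icc 1 p, (i : ℤ) * (n.choose (2 * i + 1))
      = ∑ j ∈ range p, ((j : ℤ) + 1) * (n.choose (2 * (j + 1) + 1)) := by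
    rw [← Finset.Ico_add_one_right_eq_Icc, Finset.sum_Ico_eq_sum_range]
    norm_num
    apply Finset.sum_congr rfl
    intro j _
    ring_nf
  have hsplit : ∑ i ∈ range (p + 2), (i : ℤ) * (n.choose (2 * i + 1))
      = (∑ j ∈ range p, ((j : ℤ) + 1) * (n.choose (2 * (j + 1) + 1)))
        + ((p : ℤ) + 1) * (n.choose (2 * (p + 1) + 1)) := by
    rw [Finset.sum_range_succ, Finset.sum_range_succ']
    push_cast
    ring
  have hlast : (n.choose (2 * (p + 1) + 1) : ℤ) = 1 := by
    rw [show 2 * (p + 1) + 1 = n from by omega, Nat.choose_self]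
    norm_num
  rw [hIcc]
  have := Z
  rw [hsplit, hlast] at this
  linarith [this]
end

section
/- For every integer p ≥ 0, the double sum over i from 1 to p and over k from 2i-1 to 2p of i·2^(-k)·C(k+2, 2i+1) equals p² + p/2. -/
open Finset

private lemma qB1 (n : ℕ) : ∑ j ∈ range (n+1), (Nat.choose n j : ℚ) = 2^n := by
  exact_mod_cast congrArg (Nat.cast (R := ℚ)) (Nat.sum_range_choose n)

private lemma qB2 (n : ℕ) (h : n ≠ 0) :
    ∑ j ∈ range (n+1), (-1:ℚ)^j * (Nat.choose n j : ℚ) = 0 := by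
  have := Int.alternating_sum_range_choose (n := n)
  rw [if_neg h] at this
  exact_mod_cast this

private lemma qB3 (n : ℕ) :
    ∑ j ∈ range (n+2), (j:ℚ) * (Nat.choose (n+1) j : ℚ) = ((n:ℚ)+1) * 2^n := by
  rw [Finset.sum_range_succ']
  have key : ∀ j : ℕ, ((j+1 : ℕ) : ℚ) * (Nat.choose (n+1) (j+1) : ℚ)
      = ((n:ℚ)+1) * (Nat.choose n j : ℚ) := by
    intro j
    have h' : ((Nat.succ n * Nat.choose n j : ℕ) : ℚ)
        = ((Nat.choose (n+1) (j+1) * (j+1) : ℕ) : ℚ) :=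
      congrArg (Nat.cast (R := ℚ)) (Nat.add_one_mul_choose_eq n j)
    push_cast at h' ⊢
    linear_combination -h'
  simp only [key, Nat.cast_zero, zero_mul, add_zero]
  rw [← Finset.mul_sum, qB1]

private lemma qB4 (n : ℕ) :
    ∑ j ∈ range (n+3), (-1:ℚ)^j * (j:ℚ) * (Nat.choose (n+2) j : ℚ) = 0 := by
  rw [Finset.sum_range_succ']
  have key : ∀ j : ℕ, (-1:ℚ)^(j+1) * ((j+1 : ℕ):ℚ) * (Nat.choose (n+2) (j+1) : ℚ)
      = (-(n:ℚ)-2) * ((-1:ℚ)^j * (Nat.choose (n+1) j : ℚ)) := by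
    intro j
    have h' : ((Nat.succ (n+1) * Nat.choose (n+1) j : ℕ) : ℚ)
        = ((Nat.choose (n+2) (j+1) * (j+1) : ℕ) : ℚ) :=
      congrArg (Nat.cast (R := ℚ)) (Nat.add_one_mul_choose_eq (n+1) j)
    push_cast at h' ⊢
    linear_combination ((-1:ℚ)^j) * h'
  simp only [key, Nat.cast_zero, mul_zero, zero_mul, add_zero]
  rw [← Finset.mul_sum, qB2 (n+1) (Nat.succ_ne_zero n), mul_zero]

private lemma reindex_odd (f : ℕ → ℚ) (m : ℕ) :
    ∑ j ∈ range (2*m), (if Odd j then f j else 0) = ∑ i ∈ range m, f (2*i+1) := by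
  induction m with
  | zero => simp
  | succ m ih =>
    rw [show 2*(m+1) = (2*m+1)+1 from by ring, Finset.sum_range_succ, Finset.sum_range_succ,
      Finset.sum_range_succ, ih]
    rw [if_neg (by rw [Nat.odd_iff]; omega), if_pos (by rw [Nat.odd_iff]; omega)]
    ring

private lemma oddI (m : ℕ) :
    ∑ j ∈ range (m+3), (if Odd j then ((j:ℚ)-1)/2 * (Nat.choose (m+2) j : ℚ) else 0)
      = (m:ℚ) * 2^m / 2 := by
  have key : ∀ j : ℕ, (if Odd j then ((j:ℚ)-1)/2 * (Nat.choose (m+2) j : ℚ) else 0)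
      = ((j:ℚ) * (Nat.choose (m+2) j : ℚ) - (Nat.choose (m+2) j : ℚ)
        - (-1:ℚ)^j * (j:ℚ) * (Nat.choose (m+2) j : ℚ)
        + (-1:ℚ)^j * (Nat.choose (m+2) j : ℚ))/4 := by
    intro j
    rcases Nat.even_or_odd j with h | h
    · rw [if_neg (Nat.not_odd_iff_even.mpr h), h.neg_one_pow]
      ring
    · rw [if_pos h, h.neg_one_pow]
      ring
  rw [Finset.sum_congr rfl fun j _ => key j, ← Finset.sum_div,
    Finset.sum_add_distrib, Finset.sum_sub_distrib, Finset.sum_sub_distrib]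
  have e1 := qB3 (m+1)
  have e2 := qB1 (m+2)
  have e3 := qB4 m
  have e4 := qB2 (m+2) (by omega)
  simp only [show m+1+2 = m+3 from by omega, show m+1+1 = m+2 from by omega,
    show m+2+1 = m+3 from by omega] at e1 e2 e4
  rw [e1, e2, e3, e4]
  push_cast
  ring

private lemma Lkey (m p : ℕ) (hm : m = 2*p+1 ∨ m = 2*p+2) :
    ∑ i ∈ Finset.Icc 1 (p+1), (i:ℚ) * (Nat.choose (m+2) (2*i+1) : ℚ) = (m:ℚ) * 2^m / 2 := by
  have hIcc : ∑ i ∈ Finset.Icc 1 (p+1), (i:ℚ) * (Nat.choose (m+2) (2*i+1) : ℚ)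
      = ∑ i ∈ range (p+2), (i:ℚ) * (Nat.choose (m+2) (2*i+1) : ℚ) := by
    rw [Finset.sum_range_succ' (fun i => (i:ℚ) * (Nat.choose (m+2) (2*i+1) : ℚ)) (p+1)]
    simp only [Nat.cast_zero, zero_mul, add_zero]
    rw [← Finset.Ico_add_one_right_eq_Icc, Finset.sum_Ico_eq_sum_range]
    rw [show p+1+1-1 = p+1 from by omega]
    refine Finset.sum_congr rfl fun k _ => ?_
    rw [Nat.add_comm 1 k]
  rw [hIcc, ← oddI m]
  have hr := reindex_odd (fun j => ((j:ℚ)-1)/2 * (Nat.choose (m+2) j : ℚ)) (p+2)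
  have hrange : ∑ j ∈ range (m+3), (if Odd j then ((j:ℚ)-1)/2 * (Nat.choose (m+2) j : ℚ) else 0)
      = ∑ j ∈ range (2*(p+2)), (if Odd j then ((j:ℚ)-1)/2 * (Nat.choose (m+2) j : ℚ) else 0) := by
    rcases hm with h | h
    · rw [h, show 2*p+1+3 = 2*(p+2) from by ring]
    · rw [h, show 2*p+2+3 = (2*(p+2))+1 from by ring, Finset.sum_range_succ,
        if_neg (by rw [Nat.odd_iff]; omega : ¬ Odd (2*(p+2))), add_zero]
  rw [hrange, hr]
  refine Finset.sum_congr rfl fun i _ => ?_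
  push_cast
  ring

theorem double_sum_i2_even (p : ℕ) :
    ∑ i ∈ Finset.Icc 1 p, ∑ k ∈ Finset.Icc (2 * i - 1) (2 * p),
        (i : ℚ) * (2 : ℚ) ^ (-(k : ℤ)) * Nat.choose (k + 2) (2 * i + 1) =
      (p : ℚ) ^ 2 + (p : ℚ) / 2 := by
  induction p with
  | zero => simp
  | succ p ih =>
    have split : ∀ i ∈ Finset.Icc 1 (p+1),
        (∑ k ∈ Finset.Icc (2*i-1) (2*(p+1)),
          (i : ℚ) * (2 : ℚ) ^ (-(k : ℤ)) * Nat.choose (k + 2) (2 * i + 1))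
        = (∑ k ∈ Finset.Icc (2*i-1) (2*p),
            (i : ℚ) * (2 : ℚ) ^ (-(k : ℤ)) * Nat.choose (k + 2) (2 * i + 1))
          + (i : ℚ) * (2 : ℚ) ^ (-((2*p+1 : ℕ) : ℤ)) * Nat.choose (2*p+1+2) (2 * i + 1)
          + (i : ℚ) * (2 : ℚ) ^ (-((2*p+1+1 : ℕ) : ℤ)) * Nat.choose (2*p+1+1+2) (2 * i + 1) := by
      intro i hi
      simp only [Finset.mem_Icc] at hi
      rw [show 2*(p+1) = (2*p+1)+1 from by ring,
        Finset.sum_Icc_succ_top (by omega), Finset.sum_Icc_succ_top (by omega)]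
    rw [Finset.sum_congr rfl split]
    simp only [Finset.sum_add_distrib]
    have h0 : ∑ i ∈ Finset.Icc 1 (p+1), ∑ k ∈ Finset.Icc (2*i-1) (2*p),
        (i : ℚ) * (2 : ℚ) ^ (-(k : ℤ)) * Nat.choose (k + 2) (2 * i + 1)
        = (p : ℚ) ^ 2 + (p : ℚ) / 2 := by
      rw [← Finset.Ico_add_one_right_eq_Icc, Finset.sum_Ico_succ_top (by omega), Finset.Ico_add_one_right_eq_Icc, ih]
      have he : Finset.Icc (2*(p+1)-1) (2*p) = ∅ := by
        apply Finset.Icc_eq_empty; omega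
      rw [he]
      simp
    rw [h0]
    have h1 : ∑ i ∈ Finset.Icc 1 (p+1),
        (i : ℚ) * (2 : ℚ) ^ (-((2*p+1 : ℕ) : ℤ)) * Nat.choose (2*p+1+2) (2 * i + 1)
        = (2 : ℚ) ^ (-((2*p+1 : ℕ) : ℤ)) * (((2*p+1 : ℕ) : ℚ) * 2^(2*p+1) / 2) := by
      rw [← Lkey (2*p+1) p (Or.inl rfl), Finset.mul_sum]
      refine Finset.sum_congr rfl fun i _ => ?_
      ring
    have h2 : ∑ i ∈ Finset.Icc 1 (p+1),
        (i : ℚ) * (2 : ℚ) ^ (-((2*p+1+1 : ℕ) : ℤ)) * Nat.choose (2*p+1+1+2) (2 * i + 1)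
        = (2 : ℚ) ^ (-((2*p+2 : ℕ) : ℤ)) * (((2*p+2 : ℕ) : ℚ) * 2^(2*p+2) / 2) := by
      rw [show 2*p+1+1 = 2*p+2 from by omega, show 2*p+2+2 = 2*p+2+2 from rfl,
        ← Lkey (2*p+2) p (Or.inr rfl), Finset.mul_sum]
      refine Finset.sum_congr rfl fun i _ => ?_
      ring
    rw [h1, h2]
    have z1 : (2 : ℚ) ^ (-((2*p+1 : ℕ) : ℤ)) * (2:ℚ)^(2*p+1) = 1 := by
      rw [zpow_neg, zpow_natCast]
      exact inv_mul_cancel₀ (pow_ne_zero _ (by norm_num))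
    have z2 : (2 : ℚ) ^ (-((2*p+2 : ℕ) : ℤ)) * (2:ℚ)^(2*p+2) = 1 := by
      rw [zpow_neg, zpow_natCast]
      exact inv_mul_cancel₀ (pow_ne_zero _ (by norm_num))
    push_cast at z1 z2 ⊢
    nlinarith [z1, z2]
end

section
/- For every integer p ≥ 0, the double sum over i from 1 to p+1 and over k from 2i-1 to 2p+1 of i·2^(-k)·C(k+2, 2i+1) equals p² + (3/2)p + 1/2. -/
open Finset

/-- Sums of binomial coefficients over odd/even indices. -/
lemma aux_HE (k : ℕ) :
    (∀ m, k + 2 ≤ 2 * m →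
      ∑ i ∈ range m, Nat.choose (k + 2) (2 * i + 1) = 2 ^ (k + 1)) ∧
    (∀ m, k + 3 ≤ 2 * m →
      ∑ i ∈ range m, Nat.choose (k + 2) (2 * i) = 2 ^ (k + 1)) := by
  induction k with
  | zero =>
    constructor
    · intro m hm
      obtain ⟨m', rfl⟩ : ∃ m', m = m' + 1 := ⟨m - 1, by omega⟩
      rw [Finset.sum_range_succ']
      have h0 : ∀ i ∈ range m', Nat.choose 2 (2 * (i + 1) + 1) = 0 := by
        intro i _; apply Nat.choose_eq_zero_of_lt; omega
      rw [Finset.sum_congr rfl h0]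
      simp
    · intro m hm
      obtain ⟨m', rfl⟩ : ∃ m', m = m' + 2 := ⟨m - 2, by omega⟩
      rw [Finset.sum_range_succ', Finset.sum_range_succ']
      have h0 : ∀ i ∈ range m', Nat.choose 2 (2 * (i + 1 + 1)) = 0 := by
        intro i _; apply Nat.choose_eq_zero_of_lt; omega
      rw [Finset.sum_congr rfl h0]
      simp
  | succ k ih =>
    obtain ⟨ihH, ihE⟩ := ih
    constructor
    · intro m hm
      have hp : ∀ i, Nat.choose (k + 3) (2 * i + 1)
          = Nat.choose (k + 2) (2 * i) + Nat.choose (k + 2) (2 * i + 1) :=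
        fun i => Nat.choose_succ_succ _ _
      calc ∑ i ∈ range m, Nat.choose (k + 1 + 2) (2 * i + 1)
          = ∑ i ∈ range m,
              (Nat.choose (k + 2) (2 * i) + Nat.choose (k + 2) (2 * i + 1)) := by
            exact Finset.sum_congr rfl fun i _ => hp i
        _ = (∑ i ∈ range m, Nat.choose (k + 2) (2 * i))
              + ∑ i ∈ range m, Nat.choose (k + 2) (2 * i + 1) :=
            Finset.sum_add_distrib
        _ = 2 ^ (k + 1) + 2 ^ (k + 1) := by
            rw [ihE m (by omega), ihH m (by omega)]
        _ = 2 ^ (k + 2) := by ring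
    · intro m hm
      obtain ⟨m', rfl⟩ : ∃ m', m = m' + 1 := ⟨m - 1, by omega⟩
      rw [Finset.sum_range_succ']
      have hp : ∀ i, Nat.choose (k + 3) (2 * (i + 1))
          = Nat.choose (k + 2) (2 * i + 1) + Nat.choose (k + 2) (2 * (i + 1)) := by
        intro i
        have : 2 * (i + 1) = (2 * i + 1) + 1 := by ring
        rw [this]
        exact Nat.choose_succ_succ _ _
      calc (∑ i ∈ range m', Nat.choose (k + 1 + 2) (2 * (i + 1)))
            + Nat.choose (k + 1 + 2) (2 * 0)
          = (∑ i ∈ range m',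
              (Nat.choose (k + 2) (2 * i + 1) + Nat.choose (k + 2) (2 * (i + 1))))
              + 1 := by
            rw [Finset.sum_congr rfl fun i _ => hp i]; simp
        _ = (∑ i ∈ range m', Nat.choose (k + 2) (2 * i + 1))
              + ((∑ i ∈ range m', Nat.choose (k + 2) (2 * (i + 1)))
                + Nat.choose (k + 2) (2 * 0)) := by
            rw [Finset.sum_add_distrib]; simp; ring
        _ = (∑ i ∈ range m', Nat.choose (k + 2) (2 * i + 1))
              + ∑ i ∈ range (m' + 1), Nat.choose (k + 2) (2 * i) := by
            rw [Finset.sum_range_succ']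
        _ = 2 ^ (k + 1) + 2 ^ (k + 1) := by
            rw [ihH m' (by omega), ihE (m' + 1) (by omega)]
        _ = 2 ^ (k + 2) := by ring

/-- Weighted sums of binomial coefficients over odd/even indices. -/
lemma aux_FG (k : ℕ) :
    (∀ m, k + 2 ≤ 2 * m →
      ∑ i ∈ range m, 2 * i * Nat.choose (k + 2) (2 * i + 1) = k * 2 ^ k) ∧
    (∀ m, k + 3 ≤ 2 * m →
      ∑ i ∈ range m, 2 * i * Nat.choose (k + 2) (2 * i) = (k + 2) * 2 ^ k) := by
  induction k with
  | zero =>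
    constructor
    · intro m hm
      apply Finset.sum_eq_zero
      intro i _
      rcases Nat.eq_zero_or_pos i with h | h
      · simp [h]
      · have : Nat.choose 2 (2 * i + 1) = 0 := by
          apply Nat.choose_eq_zero_of_lt; omega
        simp [this]
    · intro m hm
      obtain ⟨m', rfl⟩ : ∃ m', m = m' + 2 := ⟨m - 2, by omega⟩
      rw [Finset.sum_range_succ', Finset.sum_range_succ']
      have h0 : ∀ i ∈ range m', 2 * (i + 1 + 1) * Nat.choose 2 (2 * (i + 1 + 1)) = 0 := by
        intro i _
        have : Nat.choose 2 (2 * (i + 1 + 1)) = 0 := by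
          apply Nat.choose_eq_zero_of_lt; omega
        simp [this]
      rw [Finset.sum_congr rfl h0]
      simp
  | succ k ih =>
    obtain ⟨ihF, ihG⟩ := ih
    constructor
    · intro m hm
      have hp : ∀ i, Nat.choose (k + 3) (2 * i + 1)
          = Nat.choose (k + 2) (2 * i) + Nat.choose (k + 2) (2 * i + 1) :=
        fun i => Nat.choose_succ_succ _ _
      calc ∑ i ∈ range m, 2 * i * Nat.choose (k + 1 + 2) (2 * i + 1)
          = ∑ i ∈ range m, (2 * i * Nat.choose (k + 2) (2 * i)
              + 2 * i * Nat.choose (k + 2) (2 * i + 1)) := by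
            refine Finset.sum_congr rfl fun i _ => ?_
            rw [hp i]; ring
        _ = (∑ i ∈ range m, 2 * i * Nat.choose (k + 2) (2 * i))
              + ∑ i ∈ range m, 2 * i * Nat.choose (k + 2) (2 * i + 1) :=
            Finset.sum_add_distrib
        _ = (k + 2) * 2 ^ k + k * 2 ^ k := by
            rw [ihG m (by omega), ihF m (by omega)]
        _ = (k + 1) * 2 ^ (k + 1) := by ring
    · intro m hm
      obtain ⟨m', rfl⟩ : ∃ m', m = m' + 1 := ⟨m - 1, by omega⟩
      rw [Finset.sum_range_succ']
      have hp : ∀ i, Nat.choose (k + 3) (2 * (i + 1))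
          = Nat.choose (k + 2) (2 * i + 1) + Nat.choose (k + 2) (2 * (i + 1)) := by
        intro i
        have : 2 * (i + 1) = (2 * i + 1) + 1 := by ring
        rw [this]
        exact Nat.choose_succ_succ _ _
      have hH := (aux_HE k).1 m' (by omega)
      calc (∑ i ∈ range m', 2 * (i + 1) * Nat.choose (k + 1 + 2) (2 * (i + 1)))
            + 2 * 0 * Nat.choose (k + 1 + 2) (2 * 0)
          = ∑ i ∈ range m', (2 * i * Nat.choose (k + 2) (2 * i + 1)
              + 2 * Nat.choose (k + 2) (2 * i + 1)
              + 2 * (i + 1) * Nat.choose (k + 2) (2 * (i + 1))) := by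
            simp only [Nat.mul_zero, Nat.zero_mul, mul_zero, zero_mul, add_zero]
            refine Finset.sum_congr rfl fun i _ => ?_
            rw [hp i]; ring
        _ = (∑ i ∈ range m', 2 * i * Nat.choose (k + 2) (2 * i + 1))
              + 2 * (∑ i ∈ range m', Nat.choose (k + 2) (2 * i + 1))
              + ((∑ i ∈ range m', 2 * (i + 1) * Nat.choose (k + 2) (2 * (i + 1)))
                + 2 * 0 * Nat.choose (k + 2) (2 * 0)) := by
            rw [Finset.sum_add_distrib, Finset.sum_add_distrib, Finset.mul_sum]
            simp only [Nat.mul_zero, Nat.zero_mul, mul_zero, zero_mul, add_zero]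
        _ = (∑ i ∈ range m', 2 * i * Nat.choose (k + 2) (2 * i + 1))
              + 2 * (∑ i ∈ range m', Nat.choose (k + 2) (2 * i + 1))
              + ∑ i ∈ range (m' + 1), 2 * i * Nat.choose (k + 2) (2 * i) := by
            rw [Finset.sum_range_succ']
        _ = k * 2 ^ k + 2 * 2 ^ (k + 1) + (k + 2) * 2 ^ k := by
            rw [ihF m' (by omega), hH, ihG (m' + 1) (by omega)]
        _ = (k + 1 + 2) * 2 ^ (k + 1) := by ring

/-- Key identity: `∑ i, i * C(k+2, 2i+1) = k * 2^k / 2` in `ℚ`. -/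
lemma aux_K (k m : ℕ) (h : k + 2 ≤ 2 * m) :
    ∑ i ∈ range m, (i : ℚ) * Nat.choose (k + 2) (2 * i + 1)
      = (k : ℚ) * 2 ^ k / 2 := by
  have hF := (aux_FG k).1 m h
  have : ((∑ i ∈ range m, 2 * i * Nat.choose (k + 2) (2 * i + 1) : ℕ) : ℚ)
      = ((k * 2 ^ k : ℕ) : ℚ) := congrArg (fun n : ℕ => (n : ℚ)) hF
  push_cast at this
  have h2 : (2 : ℚ) * ∑ i ∈ range m, (i : ℚ) * Nat.choose (k + 2) (2 * i + 1)
      = (k : ℚ) * 2 ^ k := by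
    rw [Finset.mul_sum]
    rw [← this]
    exact Finset.sum_congr rfl fun i _ => by ring
  linarith

theorem double_sum_i2_odd (p : ℕ) :
    ∑ i ∈ Finset.Icc 1 (p + 1), ∑ k ∈ Finset.Icc (2 * i - 1) (2 * p + 1),
        (i : ℚ) * (2 : ℚ) ^ (-(k : ℤ)) * Nat.choose (k + 2) (2 * i + 1) =
      (p : ℚ) ^ 2 + (3 / 2) * (p : ℚ) + 1 / 2 := by
  -- extend inner sums over k to the full range Icc 0 (2p+1)
  have step1 : ∀ i ∈ Finset.Icc 1 (p + 1),
      ∑ k ∈ Finset.Icc (2 * i - 1) (2 * p + 1),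
        (i : ℚ) * (2 : ℚ) ^ (-(k : ℤ)) * Nat.choose (k + 2) (2 * i + 1)
      = ∑ k ∈ Finset.Icc 0 (2 * p + 1),
        (i : ℚ) * (2 : ℚ) ^ (-(k : ℤ)) * Nat.choose (k + 2) (2 * i + 1) := by
    intro i hi
    simp only [Finset.mem_Icc] at hi
    apply Finset.sum_subset
    · intro k hk
      simp only [Finset.mem_Icc] at hk ⊢
      omega
    · intro k hk hk'
      simp only [Finset.mem_Icc] at hk hk'
      have : Nat.choose (k + 2) (2 * i + 1) = 0 := by
        apply Nat.choose_eq_zero_of_lt; omega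
      simp [this]
  rw [Finset.sum_congr rfl step1, Finset.sum_comm]
  -- evaluate each inner sum over i
  have step2 : ∀ k ∈ Finset.Icc 0 (2 * p + 1),
      ∑ i ∈ Finset.Icc 1 (p + 1),
        (i : ℚ) * (2 : ℚ) ^ (-(k : ℤ)) * Nat.choose (k + 2) (2 * i + 1)
      = (k : ℚ) / 2 := by
    intro k hk
    simp only [Finset.mem_Icc] at hk
    have hext : ∑ i ∈ Finset.Icc 1 (p + 1),
        (i : ℚ) * Nat.choose (k + 2) (2 * i + 1)
        = ∑ i ∈ range (p + 2), (i : ℚ) * Nat.choose (k + 2) (2 * i + 1) := by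
      rw [Finset.range_eq_Ico]
      apply Finset.sum_subset
      · intro j hj
        simp only [Finset.mem_Icc] at hj
        simp only [Finset.mem_Ico]
        omega
      · intro j hj hj'
        simp only [Finset.mem_Ico] at hj
        simp only [Finset.mem_Icc] at hj'
        have : j = 0 := by omega
        simp [this]
    have hK := aux_K k (p + 2) (by omega)
    have hinner : ∑ i ∈ Finset.Icc 1 (p + 1),
        (i : ℚ) * Nat.choose (k + 2) (2 * i + 1) = (k : ℚ) * 2 ^ k / 2 := by
      rw [hext, hK]
    have hfactor : ∑ i ∈ Finset.Icc 1 (p + 1),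
        (i : ℚ) * (2 : ℚ) ^ (-(k : ℤ)) * Nat.choose (k + 2) (2 * i + 1)
        = (2 : ℚ) ^ (-(k : ℤ)) * ∑ i ∈ Finset.Icc 1 (p + 1),
            (i : ℚ) * Nat.choose (k + 2) (2 * i + 1) := by
      rw [Finset.mul_sum]
      exact Finset.sum_congr rfl fun i _ => by ring
    rw [hfactor, hinner]
    have hz : (2 : ℚ) ^ (-(k : ℤ)) = ((2 : ℚ) ^ k)⁻¹ := by
      rw [zpow_neg, zpow_natCast]
    rw [hz]
    have h2k : (2 : ℚ) ^ k ≠ 0 := by positivity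
    field_simp
  rw [Finset.sum_congr rfl step2]
  -- Gauss sum
  have hIcc : Finset.Icc 0 (2 * p + 1) = range (2 * p + 2) := by
    rw [Finset.range_eq_Ico]
    ext x
    simp only [Finset.mem_Icc, Finset.mem_Ico]
    omega
  rw [hIcc]
  have hg : (∑ k ∈ range (2 * p + 2), (k : ℚ)) = (p + 1) * (2 * p + 1) := by
    have h2 := Finset.sum_range_id_mul_two (2 * p + 2)
    have h3 : 2 * p + 2 - 1 = 2 * p + 1 := by omega
    rw [h3] at h2
    have hq := congrArg (fun n : ℕ => (n : ℚ)) h2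
    push_cast at hq
    linarith
  rw [← Finset.sum_div, hg]
  ring
end
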